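/- If (G₁, π₁) and (G₂, π₂) are effectively equivalent permutation groups, then the associated permutation polytopes P(π₁) and P(π₂) are affinely equivalent. -/

import Mathlib

open Finset

/-- The permutation matrix of `σ`: `(M_σ)_{ij} = 1` if `i = σ j` and `0` otherwise. -/
def permMat (n : ℕ) (σ : Equiv.Perm (Fin n)) : Matrix (Fin n) (Fin n) ℝ :=
  Matrix.of fun i j => if i = σ j then 1 else 0

lemma permMat_one (n : ℕ) : permMat n 1 = 1 := by
  ext i j; simp [permMat, Matrix.one_apply]; congr

lemma permMat_mul (n : ℕ) (σ τ : Equiv.Perm (Fin n)) :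
    permMat n (σ * τ) = permMat n σ * permMat n τ := by
  ext i j
  simp only [permMat, Matrix.mul_apply, Matrix.of_apply, Equiv.Perm.mul_apply]
  rw [Finset.sum_eq_single (τ j)]
  · simp; congr
  · intro k _ hk; simp [hk]
  · simp

/-- The matrix representation `Π : G → GL_n(ℝ)`, `g ↦ M_{π(g)}`, induced by a
permutation representation `π : G → Sym(n)`, viewed as acting on `ℝⁿ`. -/
noncomputable def permRep (n : ℕ) {G : Type} [Group G] (π : G →* Equiv.Perm (Fin n)) :
    Representation ℝ G (Fin n → ℝ) where
  toFun g := (permMat n (π g)).mulVecLin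
  map_one' := by simp [permMat_one]; rfl
  map_mul' g h := by simp [permMat_mul]; rfl

variable {G : Type} [Group G] [Fintype G]

/-- The affine kernel `ker°ρ` of a real representation `ρ` of `G`. -/
def affKer {V : Type} [AddCommGroup V] [Module ℝ V]
    (ρ : Representation ℝ G V) : Set (G → ℝ) :=
  {l | (∑ g : G, l g • (ρ g : V →ₗ[ℝ] V)) = 0 ∧ (∑ g : G, l g) = 0}

/-- Direct sum (realized on the product space) of two representations. -/
def prodRep {V W : Type} [AddCommGroup V] [Module ℝ V] [AddCommGroup W] [Module ℝ W]
    (ρ : Representation ℝ G V) (σ : Representation ℝ G W) :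
    Representation ℝ G (V × W) where
  toFun g := (ρ g).prodMap (σ g)
  map_one' := by ext <;> simp
  map_mul' g h := by ext <;> simp

/-- Isomorphism of `G`-representations. -/
def RepIso {V W : Type} [AddCommGroup V] [Module ℝ V] [AddCommGroup W] [Module ℝ W]
    (ρ : Representation ℝ G V) (σ : Representation ℝ G W) : Prop :=
  ∃ e : V ≃ₗ[ℝ] W, ∀ (g : G) (v : V), e (ρ g v) = σ g (e v)

/-- Stable equivalence of real representations. -/
def StablyEquivalent {V W : Type} [AddCommGroup V] [Module ℝ V] [AddCommGroup W] [Module ℝ W]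
    (ρ₁ : Representation ℝ G V) (ρ₂ : Representation ℝ G W) : Prop :=
  ∃ (V' : Type) (_ : AddCommGroup V') (_ : Module ℝ V') (ρ₁' : Representation ℝ G V')
    (W' : Type) (_ : AddCommGroup W') (_ : Module ℝ W') (ρ₂' : Representation ℝ G W'),
    affKer ρ₁ ⊆ affKer ρ₁' ∧ affKer ρ₂ ⊆ affKer ρ₂' ∧
    RepIso (prodRep ρ₁ ρ₁') (prodRep ρ₂ ρ₂')

/-- Two polytopes `P ⊆ E₁`, `Q ⊆ E₂` are affinely equivalent: there is an affine
isomorphism between their affine hulls mapping `P` onto `Q` (encoded by a pair of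
affine maps of the ambient spaces which are mutually inverse on the affine hulls). -/
def AffinelyEquivalent {E₁ E₂ : Type} [AddCommGroup E₁] [Module ℝ E₁]
    [AddCommGroup E₂] [Module ℝ E₂] (P : Set E₁) (Q : Set E₂) : Prop :=
  ∃ (f : E₁ →ᵃ[ℝ] E₂) (g : E₂ →ᵃ[ℝ] E₁),
    f '' P = Q ∧
    (∀ x ∈ affineSpan ℝ P, g (f x) = x) ∧
    (∀ y ∈ affineSpan ℝ Q, f (g y) = y)

section Aux

/-- Factor a linear map through another one with smaller kernel. -/
lemma factor_through {V W U : Type} [AddCommGroup V] [Module ℝ V] [AddCommGroup W] [Module ℝ W]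
    [AddCommGroup U] [Module ℝ U] (A : V →ₗ[ℝ] W) (B : V →ₗ[ℝ] U)
    (h : LinearMap.ker A ≤ LinearMap.ker B) : ∃ C : W →ₗ[ℝ] U, ∀ v, C (A v) = B v := by
  obtain ⟨C, hC⟩ := LinearMap.exists_extend
    (((LinearMap.ker A).liftQ B h).comp A.quotKerEquivRange.symm.toLinearMap)
  refine ⟨C, fun v => ?_⟩
  have h1 : A v = (LinearMap.range A).subtype ⟨A v, LinearMap.mem_range_self A v⟩ := rfl
  rw [h1, ← LinearMap.comp_apply, hC]
  simp [LinearMap.quotKerEquivRange_symm_apply_image, Submodule.liftQ_apply]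

/-- The "cone" map sending weights to the weighted sum of points together with total weight. -/
noncomputable def combMap {I E : Type} [Fintype I] [AddCommGroup E] [Module ℝ E] (p : I → E) :
    (I → ℝ) →ₗ[ℝ] E × ℝ where
  toFun l := (∑ g, l g • p g, ∑ g, l g)
  map_add' l m := by
    simp [add_smul, Finset.sum_add_distrib, Prod.ext_iff]
  map_smul' c l := by
    simp [smul_smul, Finset.smul_sum, Finset.mul_sum, Prod.ext_iff]

lemma combMap_single {I E : Type} [Fintype I] [DecidableEq I] [AddCommGroup E] [Module ℝ E]
    (p : I → E) (g : I) : combMap p (Pi.single g 1) = (p g, 1) := by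
  simp [combMap, Pi.single_apply, ite_smul]

/-- The affine map on `E₁` induced by a linear map `E₁ × ℝ → E₂ × ℝ`, via the slice at height 1. -/
noncomputable def affOf {E₁ E₂ : Type} [AddCommGroup E₁] [Module ℝ E₁]
    [AddCommGroup E₂] [Module ℝ E₂] (C : (E₁ × ℝ) →ₗ[ℝ] (E₂ × ℝ)) : E₁ →ᵃ[ℝ] E₂ where
  toFun x := (C (x, 1)).1
  linear := (LinearMap.fst ℝ E₂ ℝ).comp (C.comp (LinearMap.inl ℝ E₁ ℝ))
  map_vadd' x v := by
    have h : ((v + x : E₁), (1 : ℝ)) = (v, (0 : ℝ)) + (x, (1 : ℝ)) := by simp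
    show (C (v + x, 1)).1 = (C (v, 0)).1 + (C (x, 1)).1
    rw [h, map_add, Prod.fst_add]

lemma affOf_apply {E₁ E₂ : Type} [AddCommGroup E₁] [Module ℝ E₁]
    [AddCommGroup E₂] [Module ℝ E₂] (C : (E₁ × ℝ) →ₗ[ℝ] (E₂ × ℝ)) (x : E₁) :
    affOf C x = (C (x, 1)).1 := rfl

lemma exists_weights_of_mem_affineSpan {I E : Type} [Fintype I] [AddCommGroup E] [Module ℝ E]
    {p : I → E} {x : E} (h : x ∈ affineSpan ℝ (Set.range p)) :
    ∃ l : I → ℝ, (∑ g, l g) = 1 ∧ (∑ g, l g • p g) = x := by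
  classical
  obtain ⟨s, w, hw, rfl⟩ := eq_affineCombination_of_mem_affineSpan h
  refine ⟨fun g => if g ∈ s then w g else 0, ?_, ?_⟩
  · rw [Finset.sum_ite_mem, Finset.univ_inter, hw]
  · rw [Finset.affineCombination_eq_linear_combination s p w hw]
    simp only [ite_smul, zero_smul]
    rw [Finset.sum_ite_mem, Finset.univ_inter]

/-- Core geometric lemma: two families of points with the same affine dependencies have
affinely equivalent convex hulls. -/
lemma core_affine {I E₁ E₂ : Type} [Fintype I] [AddCommGroup E₁] [Module ℝ E₁]
    [AddCommGroup E₂] [Module ℝ E₂] (p : I → E₁) (q : I → E₂)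
    (hker : ∀ l : I → ℝ,
      ((∑ g, l g • p g) = 0 ∧ (∑ g, l g) = 0) ↔ ((∑ g, l g • q g) = 0 ∧ (∑ g, l g) = 0)) :
    AffinelyEquivalent (convexHull ℝ (Set.range p)) (convexHull ℝ (Set.range q)) := by
  classical
  have hk : LinearMap.ker (combMap p) = LinearMap.ker (combMap q) := by
    ext l
    simp only [LinearMap.mem_ker, combMap, LinearMap.coe_mk, AddHom.coe_mk, Prod.mk_eq_zero]
    exact hker l
  obtain ⟨C, hC⟩ := factor_through (combMap p) (combMap q) hk.le
  obtain ⟨D, hD⟩ := factor_through (combMap q) (combMap p) hk.ge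
  have hCp : ∀ g, affOf C (p g) = q g := by
    intro g
    have := hC (Pi.single g 1)
    rw [combMap_single, combMap_single] at this
    rw [affOf_apply, this]
  have hDq : ∀ g, affOf D (q g) = p g := by
    intro g
    have := hD (Pi.single g 1)
    rw [combMap_single, combMap_single] at this
    rw [affOf_apply, this]
  have hinv : ∀ {F₁ F₂ : Type} [AddCommGroup F₁] [Module ℝ F₁] [AddCommGroup F₂] [Module ℝ F₂]
      (p' : I → F₁) (q' : I → F₂) (C' : (F₁ × ℝ) →ₗ[ℝ] (F₂ × ℝ)) (D' : (F₂ × ℝ) →ₗ[ℝ] (F₁ × ℝ)),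
      (∀ v, C' (combMap p' v) = combMap q' v) → (∀ v, D' (combMap q' v) = combMap p' v) →
      ∀ x ∈ affineSpan ℝ (Set.range p'), affOf D' (affOf C' x) = x := by
    intro F₁ F₂ _ _ _ _ p' q' C' D' hC' hD' x hx
    obtain ⟨l, hl1, hlx⟩ := exists_weights_of_mem_affineSpan hx
    have hA : combMap p' l = (x, 1) := by simp [combMap, hl1, hlx]
    have h1 : affOf C' x = (combMap q' l).1 := by rw [affOf_apply, ← hA, hC']
    have h2 : ((affOf C' x : F₂), (1 : ℝ)) = combMap q' l := by
      rw [h1]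
      have : (combMap q' l).2 = 1 := by simpa [combMap] using hl1
      exact Prod.ext rfl this.symm
    rw [affOf_apply, h2, hD', hA]
  refine ⟨affOf C, affOf D, ?_, ?_, ?_⟩
  rotate_left
  · rw [affineSpan_convexHull]; exact hinv p q C D hC hD
  · rw [affineSpan_convexHull]; exact hinv q p D C hD hC
  rw [AffineMap.image_convexHull, ← Set.range_comp]
  congr 1
  exact congrArg _ (funext fun g => hCp g)

lemma permRep_apply {n : ℕ} {G : Type} [Group G] (π : G →* Equiv.Perm (Fin n)) (g : G) :
    permRep n π g = (permMat n (π g)).mulVecLin := rfl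

lemma sum_smul_mulVecLin_eq_zero_iff {I : Type} [Fintype I] {n : ℕ} (l : I → ℝ)
    (m : I → Matrix (Fin n) (Fin n) ℝ) :
    (∑ g, l g • (m g).mulVecLin) = 0 ↔ (∑ g, l g • m g) = 0 := by
  have h : (∑ g, l g • (m g).mulVecLin) = (∑ g, l g • m g).mulVecLin := by
    simp only [← Matrix.toLin'_apply', map_sum, map_smul]
  rw [h, ← Matrix.toLin'_apply', LinearEquiv.map_eq_zero_iff]

lemma affKer_prodRep {V W : Type} [AddCommGroup V] [Module ℝ V] [AddCommGroup W] [Module ℝ W]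
    (ρ : Representation ℝ G V) (σ : Representation ℝ G W) :
    affKer (prodRep ρ σ) = affKer ρ ∩ affKer σ := by
  ext l
  simp only [affKer, Set.mem_setOf_eq, Set.mem_inter_iff]
  have hval : ∀ v w, (∑ g : G, l g • prodRep ρ σ g) (v, w)
      = ((∑ g : G, l g • ρ g) v, (∑ g : G, l g • σ g) w) := by
    intro v w
    simp only [LinearMap.sum_apply, LinearMap.smul_apply]
    rw [Prod.ext_iff]
    constructor
    · rw [Prod.fst_sum]
      exact Finset.sum_congr rfl fun g _ => rfl
    · rw [Prod.snd_sum]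
      exact Finset.sum_congr rfl fun g _ => rfl
  constructor
  · rintro ⟨h, hs⟩
    refine ⟨⟨?_, hs⟩, ?_, hs⟩
    · ext v
      have := hval v 0
      rw [h] at this
      simpa using congrArg Prod.fst this.symm
    · ext w
      have := hval 0 w
      rw [h] at this
      simpa using congrArg Prod.snd this.symm
  · rintro ⟨⟨h1, hs⟩, h2, _⟩
    refine ⟨LinearMap.ext fun vw => ?_, hs⟩
    obtain ⟨v, w⟩ := vw
    rw [hval, h1, h2]
    simp

lemma affKer_of_repIso {V W : Type} [AddCommGroup V] [Module ℝ V] [AddCommGroup W] [Module ℝ W]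
    {ρ : Representation ℝ G V} {σ : Representation ℝ G W} (h : RepIso ρ σ) :
    affKer ρ = affKer σ := by
  obtain ⟨e, he⟩ := h
  ext l
  simp only [affKer, Set.mem_setOf_eq]
  have key : ∀ w, (∑ g : G, l g • σ g) w = e ((∑ g : G, l g • ρ g) (e.symm w)) := by
    intro w
    simp only [LinearMap.sum_apply, LinearMap.smul_apply, map_sum, map_smul]
    refine Finset.sum_congr rfl fun g _ => ?_
    rw [he, e.apply_symm_apply]
  constructor
  · rintro ⟨h0, hs⟩
    refine ⟨?_, hs⟩
    ext w
    rw [key, h0]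
    simp
  · rintro ⟨h0, hs⟩
    refine ⟨?_, hs⟩
    ext v
    have := key (e v)
    rw [h0, e.symm_apply_apply] at this
    simp only [LinearMap.zero_apply] at this ⊢
    exact (LinearEquiv.map_eq_zero_iff e).mp this.symm

end Aux

/-- If `(G₁, π₁)` and `(G₂, π₂)` are effectively equivalent permutation
groups, then the associated permutation polytopes `P(π₁)` and `P(π₂)` are affinely
equivalent. -/
theorem effectivelyEquivalent_implies_affinelyEquivalent
    {G₁ G₂ : Type} [Group G₁] [Fintype G₁] [Group G₂] [Fintype G₂]
    {n₁ n₂ : ℕ} (π₁ : G₁ →* Equiv.Perm (Fin n₁)) (π₂ : G₂ →* Equiv.Perm (Fin n₂))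
    (hπ₁ : Function.Injective π₁) (hπ₂ : Function.Injective π₂)
    (heff : ∃ φ : G₁ ≃* G₂,
      StablyEquivalent (permRep n₁ π₁) ((permRep n₂ π₂).comp φ.toMonoidHom)) :
    AffinelyEquivalent
      (convexHull ℝ (Set.range fun g : G₁ => permMat n₁ (π₁ g)))
      (convexHull ℝ (Set.range fun g : G₂ => permMat n₂ (π₂ g))) := by
  obtain ⟨φ, V', _, _, ρ₁', W', _, _, ρ₂', h1, h2, hiso⟩ := heff
  -- the two representations of G₁ have equal affine kernels
  have hker : affKer (permRep n₁ π₁) = affKer ((permRep n₂ π₂).comp φ.toMonoidHom) :=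
    calc affKer (permRep n₁ π₁)
        = affKer (permRep n₁ π₁) ∩ affKer ρ₁' := (Set.inter_eq_left.mpr h1).symm
      _ = affKer (prodRep (permRep n₁ π₁) ρ₁') := (affKer_prodRep _ _).symm
      _ = affKer (prodRep ((permRep n₂ π₂).comp φ.toMonoidHom) ρ₂') := affKer_of_repIso hiso
      _ = affKer ((permRep n₂ π₂).comp φ.toMonoidHom) ∩ affKer ρ₂' := affKer_prodRep _ _
      _ = affKer ((permRep n₂ π₂).comp φ.toMonoidHom) := Set.inter_eq_left.mpr h2
  -- reindex the second family of matrices by G₁ via φ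
  have hrange : (Set.range fun g : G₂ => permMat n₂ (π₂ g))
      = Set.range fun g : G₁ => permMat n₂ (π₂ (φ g)) :=
    (Function.Surjective.range_comp φ.surjective fun g : G₂ => permMat n₂ (π₂ g)).symm
  rw [hrange]
  apply core_affine
  intro l
  have hmem := Set.ext_iff.mp hker l
  simp only [affKer, Set.mem_setOf_eq, MonoidHom.comp_apply, MulEquiv.coe_toMonoidHom,
    permRep_apply] at hmem
  rw [sum_smul_mulVecLin_eq_zero_iff, sum_smul_mulVecLin_eq_zero_iff] at hmem
  exact hmem
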